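/- Let B be a real Banach space and v : ℕ → B a sequence with ∑_{k} ‖v_k‖ < ∞. Let σ : ℕ → ℝ, and suppose there exists a sequence x : ℕ → ℝ with x_k > 0 for all k, ∑_k x_k < ∞, and ∑_k σ_k²/x_k < ∞. Then the product Gaussian measure μ^σ assigns measure 1 to the set of sequences a ∈ ℝ^ℕ for which the partial sums ∑_{k=0}^{n−1} a_k v_k converge in B as n → ∞. (In particular, μ^σ gives full measure to ⋃_n {a : |a_k| ≤ √(x_k) for all k > n}, and every such a yields a convergent series.) -/

import Mathlib

open MeasureTheory ProbabilityTheory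

lemma gaussian_tail_bound_aux (w : NNReal) {c : ℝ} (hc : 0 < c) :
    gaussianReal 0 w {t : ℝ | c ≤ |t|} ≤ ENNReal.ofReal (6 * (w : ℝ) / c ^ 2) := by
  have hsm : MeasurableSet {t : ℝ | c ≤ |t|} :=
    (isClosed_le continuous_const continuous_abs).measurableSet
  rcases eq_or_ne w 0 with hw | hw
  · rw [hw, gaussianReal_zero_var, Measure.dirac_apply' _ hsm]
    have h0 : (0:ℝ) ∉ {t : ℝ | c ≤ |t|} := by simp [hc.not_ge]
    simp [Set.indicator_of_notMem h0]
  · have hwpos : (0:ℝ) < (w : ℝ) := by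
      have := hw
      positivity
    set K : ℝ := Real.exp (-(c ^ 2 / (4 * w))) with hK
    set g : ℝ → ℝ := fun t => (Real.sqrt (2 * Real.pi * w))⁻¹ *
      (K * Real.exp (-(4 * (w:ℝ))⁻¹ * t ^ 2)) with hg
    have h4w : (0:ℝ) < 4 * (w:ℝ) := by positivity
    have hgi : Integrable g := by
      apply Integrable.const_mul
      exact (integrable_exp_neg_mul_sq (by positivity : (0:ℝ) < (4 * (w:ℝ))⁻¹)).const_mul K
    have hgnn : ∀ t, 0 ≤ g t := by
      intro t
      rw [hg]
      positivity
    have hpt : ∀ t ∈ {t : ℝ | c ≤ |t|}, gaussianPDF 0 w t ≤ ENNReal.ofReal (g t) := by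
      intro t ht
      apply ENNReal.ofReal_le_ofReal
      rw [gaussianPDFReal, hg]
      dsimp only
      have hc2 : c ^ 2 ≤ t ^ 2 := by
        have := pow_le_pow_left₀ hc.le ht 2
        simpa [sq_abs] using this
      have hKe : K * Real.exp (-(4 * (w:ℝ))⁻¹ * t ^ 2)
          = Real.exp ((-(c ^ 2) + -(t ^ 2)) / (4 * (w:ℝ))) := by
        rw [hK, ← Real.exp_add]
        congr 1
        field_simp
      rw [hKe]
      refine mul_le_mul_of_nonneg_left ?_ (inv_nonneg.2 (Real.sqrt_nonneg _))
      apply Real.exp_le_exp.2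
      rw [sub_zero, div_le_div_iff₀ (by positivity) h4w]
      nlinarith [hc2, hwpos, sq_nonneg t]
    have hint : ∫ t, g t = K * Real.sqrt 2 := by
      rw [hg]
      rw [MeasureTheory.integral_const_mul, MeasureTheory.integral_const_mul,
        integral_gaussian]
      have h1 : Real.pi / (4 * (w:ℝ))⁻¹ = 2 * (2 * Real.pi * w) := by
        field_simp
        ring
      rw [h1, Real.sqrt_mul (by norm_num : (0:ℝ) ≤ 2)]
      have h2 : Real.sqrt (2 * Real.pi * w) ≠ 0 := by
        apply Real.sqrt_ne_zero'.2
        positivity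
      field_simp
    have hKle : K ≤ 4 * (w:ℝ) / c ^ 2 := by
      rw [hK, Real.exp_neg, show (4 * (w:ℝ) / c ^ 2) = (c ^ 2 / (4 * (w:ℝ)))⁻¹ by
        rw [inv_div]]
      have hy : 0 < c ^ 2 / (4 * (w:ℝ)) := by positivity
      apply inv_anti₀ hy
      linarith [Real.add_one_le_exp (c ^ 2 / (4 * (w:ℝ)))]
    have hsqrt2 : Real.sqrt 2 ≤ 1.5 := by
      nlinarith [Real.sq_sqrt (by norm_num : (0:ℝ) ≤ 2), Real.sqrt_nonneg 2]
    calc gaussianReal 0 w {t : ℝ | c ≤ |t|}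
        = ∫⁻ t in {t : ℝ | c ≤ |t|}, gaussianPDF 0 w t := gaussianReal_apply 0 hw _
      _ ≤ ∫⁻ t in {t : ℝ | c ≤ |t|}, ENNReal.ofReal (g t) := by
          refine setLIntegral_mono ?_ hpt
          apply Measurable.ennreal_ofReal
          fun_prop
      _ ≤ ∫⁻ t, ENNReal.ofReal (g t) := setLIntegral_le_lintegral _ _
      _ = ENNReal.ofReal (∫ t, g t) :=
          (ofReal_integral_eq_lintegral_ofReal hgi (ae_of_all _ hgnn)).symm
      _ ≤ ENNReal.ofReal (6 * (w:ℝ) / c ^ 2) := by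
          apply ENNReal.ofReal_le_ofReal
          rw [hint]
          have : K * Real.sqrt 2 ≤ (4 * (w:ℝ) / c ^ 2) * 1.5 := by
            apply mul_le_mul hKle hsqrt2 (Real.sqrt_nonneg _)
            positivity
          calc K * Real.sqrt 2 ≤ (4 * (w:ℝ) / c ^ 2) * 1.5 := this
            _ ≤ 6 * (w:ℝ) / c ^ 2 := by
                rw [div_mul_eq_mul_div, div_le_div_iff₀ (by positivity) (by positivity)]
                nlinarith [hwpos, sq_nonneg c]

/-- **Full Gaussian measure of convergent coefficient sequences.**
Let `B` be a real Banach space and `v : ℕ → B` with `∑ₖ ‖v k‖ < ∞`.  Let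
`σ : ℕ → ℝ` and suppose there is a sequence `x : ℕ → ℝ` with `x k > 0`,
`∑ₖ x k < ∞` and `∑ₖ σₖ² / x k < ∞`.  Then the product Gaussian measure
`μ^σ = ⊗ₖ gaussianReal 0 (σₖ²)` — the probability measure on `ℝ^ℕ` whose
finite-dimensional marginals are finite products of `gaussianReal 0 (σₖ²)` —
assigns measure `1` to the set of `a : ℕ → ℝ` for which the partial sums
`∑_{k<n} a k • v k` converge in `B`. -/
theorem product_gaussian_ae_convergent_series
    {B : Type*} [NormedAddCommGroup B] [NormedSpace ℝ B] [CompleteSpace B]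
    (v : ℕ → B) (hv : Summable (fun k => ‖v k‖))
    (σ : ℕ → ℝ) (x : ℕ → ℝ) (hx : ∀ k, 0 < x k) (hxs : Summable x)
    (hσx : Summable (fun k => σ k ^ 2 / x k))
    (μ : Measure (ℕ → ℝ)) [IsProbabilityMeasure μ]
    (hμ : ∀ n : ℕ, μ.map (fun a (i : Fin n) => a i)
        = Measure.pi (fun i : Fin n => gaussianReal 0 ⟨σ i ^ 2, sq_nonneg _⟩)) :
    μ {a : ℕ → ℝ | ∃ f : B,
        Filter.Tendsto (fun n => ∑ k ∈ Finset.range n, a k • v k) Filter.atTop (nhds f)} = 1 := by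
  classical
  set c : ℕ → ℝ := fun k => Real.sqrt (x k) with hc_def
  have hc : ∀ k, 0 < c k := fun k => Real.sqrt_pos.2 (hx k)
  set E : ℕ → Set (ℕ → ℝ) := fun k => {a : ℕ → ℝ | c k ≤ |a k|} with hE_def
  have hT : ∀ k, MeasurableSet {t : ℝ | c k ≤ |t|} := fun k =>
    (isClosed_le continuous_const continuous_abs).measurableSet
  have hEm : ∀ k, MeasurableSet (E k) := fun k => by
    have h : E k = (fun a : ℕ → ℝ => a k) ⁻¹' {t : ℝ | c k ≤ |t|} := rfl
    rw [h]
    exact (measurable_pi_apply k) (hT k)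
  -- tail bound for each coordinate
  have hEk : ∀ k, μ (E k) ≤ ENNReal.ofReal (6 * σ k ^ 2 / x k) := by
    intro k
    have hF : Measurable (fun a : ℕ → ℝ => fun i : Fin (k + 1) => a i) :=
      measurable_pi_lambda _ fun i => measurable_pi_apply _
    have hSm : MeasurableSet {b : Fin (k + 1) → ℝ | c k ≤ |b (Fin.last k)|} := by
      have h : {b : Fin (k + 1) → ℝ | c k ≤ |b (Fin.last k)|}
          = (fun b : Fin (k + 1) → ℝ => b (Fin.last k)) ⁻¹' {t : ℝ | c k ≤ |t|} := rfl
      rw [h]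
      exact (measurable_pi_apply (Fin.last k)) (hT k)
    have hpre : E k = (fun a : ℕ → ℝ => fun i : Fin (k + 1) => a i) ⁻¹'
        {b : Fin (k + 1) → ℝ | c k ≤ |b (Fin.last k)|} := by
      ext a
      simp [hE_def, Fin.val_last]
    rw [hpre, ← Measure.map_apply hF hSm, hμ (k + 1)]
    set t : Fin (k + 1) → Set ℝ :=
      fun i => if i = Fin.last k then {t : ℝ | c k ≤ |t|} else Set.univ with ht_def
    have hSt : {b : Fin (k + 1) → ℝ | c k ≤ |b (Fin.last k)|} = Set.pi Set.univ t := by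
      ext b
      simp only [Set.mem_univ_pi, Set.mem_setOf_eq, ht_def]
      constructor
      · intro h i
        by_cases hi : i = Fin.last k
        · simpa [hi] using h
        · simp [hi]
      · intro h
        have := h (Fin.last k)
        simpa using this
    haveI hsf : ∀ i : Fin (k + 1), SigmaFinite (gaussianReal 0 ⟨σ i ^ 2, sq_nonneg _⟩) :=
      fun i => (by infer_instance : ∀ w : NNReal, SigmaFinite (gaussianReal 0 w)) _
    haveI hpm : ∀ i : Fin (k + 1), IsProbabilityMeasure (gaussianReal 0 ⟨σ i ^ 2, sq_nonneg _⟩) :=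
      fun i => (by infer_instance : ∀ w : NNReal, IsProbabilityMeasure (gaussianReal 0 w)) _
    rw [hSt, Measure.pi_pi]
    have hprod : ∀ i ∈ Finset.univ, i ≠ Fin.last k →
        gaussianReal 0 ⟨σ i ^ 2, sq_nonneg _⟩ (t i) = 1 := by
      intro i _ hi
      simp [ht_def, hi]
    rw [Finset.prod_eq_single (Fin.last k) hprod (by simp)]
    simp only [ht_def, if_pos rfl]
    have hb := gaussian_tail_bound_aux (⟨σ (Fin.last k : ℕ) ^ 2, sq_nonneg _⟩ : NNReal) (hc k)
    refine hb.trans ?_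
    apply ENNReal.ofReal_le_ofReal
    have hcx : c k ^ 2 = x k := Real.sq_sqrt (hx k).le
    rw [hcx]
    simp [Fin.val_last]
    exact le_rfl
  -- Borel-Cantelli
  have hsum2 : Summable (fun k => 6 * σ k ^ 2 / x k) := by
    have := hσx.mul_left 6
    simpa [mul_div_assoc] using this
  have hnn : ∀ k, 0 ≤ 6 * σ k ^ 2 / x k := fun k => by
    have := (hx k).le
    positivity
  have htsum : ∑' k, μ (E k) ≠ ⊤ := by
    have hle : ∑' k, μ (E k) ≤ ENNReal.ofReal (∑' k, 6 * σ k ^ 2 / x k) := by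
      rw [ENNReal.ofReal_tsum_of_nonneg hnn hsum2]
      exact ENNReal.tsum_le_tsum hEk
    exact ne_top_of_le_ne_top ENNReal.ofReal_ne_top hle
  have hlimsup : μ (Filter.limsup E Filter.atTop) = 0 :=
    measure_limsup_atTop_eq_zero htsum
  have hGm : MeasurableSet (Filter.limsup E Filter.atTop) := MeasurableSet.measurableSet_limsup hEm
  have hG : μ (Filter.limsup E Filter.atTop)ᶜ = 1 := by
    rw [measure_compl hGm (measure_ne_top μ _), hlimsup, measure_univ]
    simp
  have hsub : (Filter.limsup E Filter.atTop)ᶜ ⊆ {a : ℕ → ℝ | ∃ f : B,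
      Filter.Tendsto (fun n => ∑ k ∈ Finset.range n, a k • v k) Filter.atTop (nhds f)} := by
    intro a ha
    rw [Set.mem_compl_iff, Filter.mem_limsup_iff_frequently_mem, Filter.not_frequently] at ha
    have hc0 : Filter.Tendsto c Filter.atTop (nhds 0) := by
      have hx0 := hxs.tendsto_atTop_zero
      have := (Real.continuous_sqrt.tendsto 0).comp hx0
      simpa [hc_def, Function.comp_def] using this
    have hc1 : ∀ᶠ k in Filter.atTop, c k < 1 := hc0.eventually (gt_mem_nhds one_pos)
    have hbound : ∀ᶠ k in Filter.atTop, ‖a k • v k‖ ≤ ‖v k‖ := by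
      filter_upwards [ha, hc1] with k h1 h2
      have h3 : |a k| < c k := not_le.1 h1
      rw [norm_smul]
      have h4 : ‖a k‖ ≤ 1 := by
        rw [Real.norm_eq_abs]
        linarith
      calc ‖a k‖ * ‖v k‖ ≤ 1 * ‖v k‖ :=
            mul_le_mul_of_nonneg_right h4 (norm_nonneg _)
        _ = ‖v k‖ := one_mul _
    have hsum : Summable (fun k => a k • v k) := by
      refine Summable.of_norm_bounded_eventually_nat hv ?_
      simpa using hbound
    exact ⟨∑' k, a k • v k, hsum.hasSum.tendsto_sum_nat⟩
  refine le_antisymm prob_le_one ?_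
  calc (1 : ENNReal) = μ (Filter.limsup E Filter.atTop)ᶜ := hG.symm
    _ ≤ _ := measure_mono hsub
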